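/- Let f = g + h with g smooth convex and h(X) = ‖X‖_{1,Λ}. Define the minimum-norm subgradient grad^S_{ij} f(X) equal to ∇_{ij}g(X) + λ_{ij} if X_{ij} > 0, ∇_{ij}g(X) − λ_{ij} if X_{ij} < 0, and sign(∇_{ij}g(X))·max(|∇_{ij}g(X)| − λ_{ij}, 0) if X_{ij} = 0. Then for any index set J, grad^S_{ij} f(X) = 0 for all (i,j) ∈ J if and only if Δ = 0 minimizes f(X + Δ) over symmetric Δ with Δ_{ij} = 0 for all (i,j) ∉ J. -/

import Mathlib

open Matrix BigOperators Filter

/-- Weighted elementwise ℓ1 norm `‖X‖_{1,Λ} = Σᵢⱼ Λᵢⱼ|Xᵢⱼ|`. -/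
noncomputable def norm1 {p : ℕ} (Λ X : Matrix (Fin p) (Fin p) ℝ) : ℝ :=
  ∑ i, ∑ j, Λ i j * |X i j|

/-- The minimum-norm subgradient of `f = g + ‖·‖_{1,Λ}` at `X`, where `G = ∇g(X)`. -/
noncomputable def gradS {p : ℕ} (G Λ X : Matrix (Fin p) (Fin p) ℝ) (i j : Fin p) : ℝ :=
  if 0 < X i j then G i j + Λ i j
  else if X i j < 0 then G i j - Λ i j
  else Real.sign (G i j) * max (|G i j| - Λ i j) 0

lemma deriv_ge_right {f : ℝ → ℝ} {D c : ℝ} (hf : HasDerivAt f D 0)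
    (h : ∀ᶠ t in nhdsWithin (0:ℝ) (Set.Ioi 0), c * t ≤ f t - f 0) : c ≤ D := by
  have h1 : Tendsto (slope f 0) (nhdsWithin (0:ℝ) (Set.Ioi 0)) (nhds D) :=
    (hasDerivAt_iff_tendsto_slope.mp hf).mono_left
      (nhdsWithin_mono _ (fun t ht => ne_of_gt ht))
  refine ge_of_tendsto h1 ?_
  filter_upwards [h, self_mem_nhdsWithin] with t ht (ht0 : 0 < t)
  rw [slope_def_field, sub_zero, le_div_iff₀ ht0]
  linarith

lemma deriv_le_left {f : ℝ → ℝ} {D c : ℝ} (hf : HasDerivAt f D 0)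
    (h : ∀ᶠ t in nhdsWithin (0:ℝ) (Set.Iio 0), c * t ≤ f t - f 0) : D ≤ c := by
  have h1 : Tendsto (slope f 0) (nhdsWithin (0:ℝ) (Set.Iio 0)) (nhds D) :=
    (hasDerivAt_iff_tendsto_slope.mp hf).mono_left
      (nhdsWithin_mono _ (fun t ht => ne_of_lt ht))
  refine le_of_tendsto h1 ?_
  filter_upwards [h, self_mem_nhdsWithin] with t ht (ht0 : t < 0)
  rw [slope_def_field, sub_zero, div_le_iff_of_neg ht0]
  linarith

lemma sum_pair_support {p : ℕ} (i j : Fin p) (F : Fin p → Fin p → ℝ)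
    (hF : ∀ k l, ¬((k = i ∧ l = j) ∨ (k = j ∧ l = i)) → F k l = 0) :
    ∑ k, ∑ l, F k l = if i = j then F i j else F i j + F j i := by
  rw [← Finset.sum_product']
  have hsub : ({(i,j), (j,i)} : Finset (Fin p × Fin p)) ⊆ Finset.univ ×ˢ Finset.univ := by
    simp [Finset.subset_iff]
  rw [← Finset.sum_subset hsub (by
    rintro ⟨k,l⟩ _ hnx
    simp only [Finset.mem_insert, Finset.mem_singleton, Prod.mk.injEq, not_or] at hnx
    exact hF k l (by tauto))]
  by_cases h : i = j
  · subst h; simp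
  · rw [Finset.sum_pair (by simp [Prod.ext_iff, h, Ne.symm h])]
    simp [h]

lemma key_nonneg {a l x d : ℝ} (hl : 0 ≤ l)
    (h : (if 0 < x then a + l else if x < 0 then a - l
          else Real.sign a * max (|a| - l) 0) = 0) :
    0 ≤ a * d + l * (|x + d| - |x|) := by
  by_cases hx : 0 < x
  · rw [if_pos hx] at h
    have ha : a = -l := by linarith
    have h1 : x + d ≤ |x + d| := le_abs_self _
    have h2 : |x| = x := abs_of_pos hx
    rw [h2, ha]
    nlinarith [mul_nonneg hl (sub_nonneg.2 h1)]
  · rw [if_neg hx] at h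
    by_cases hx' : x < 0
    · rw [if_pos hx'] at h
      have ha : a = l := by linarith
      have h1 : -(x + d) ≤ |x + d| := neg_le_abs _
      have h2 : |x| = -x := abs_of_neg hx'
      rw [h2, ha]
      nlinarith [mul_nonneg hl (by linarith : (0:ℝ) ≤ |x + d| + (x + d))]
    · rw [if_neg hx'] at h
      have hx0 : x = 0 := le_antisymm (not_lt.1 hx) (not_lt.1 hx')
      subst hx0
      have hal : |a| ≤ l := by
        rcases eq_or_ne a 0 with ha | ha
        · simpa [ha] using hl
        · have hs : Real.sign a ≠ 0 := fun hc => ha (Real.sign_eq_zero_iff.1 hc)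
          have hmax : max (|a| - l) 0 = 0 := by
            rcases mul_eq_zero.1 h with h' | h'
            · exact absurd h' hs
            · exact h'
          linarith [max_eq_right_iff.1 hmax]
      simp only [zero_add, abs_zero, sub_zero]
      nlinarith [neg_abs_le (a * d), abs_mul a d,
        mul_le_mul_of_nonneg_right hal (abs_nonneg d)]

lemma key_gradS_zero {a l x : ℝ}
    (hpos : 0 < x → a = -l) (hneg : x < 0 → a = l) (hzero : x = 0 → |a| ≤ l) :
    (if 0 < x then a + l else if x < 0 then a - l
          else Real.sign a * max (|a| - l) 0) = 0 := by
  by_cases hx : 0 < x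
  · rw [if_pos hx, hpos hx]; ring
  · rw [if_neg hx]
    by_cases hx' : x < 0
    · rw [if_pos hx', hneg hx']; ring
    · rw [if_neg hx']
      have h := hzero (le_antisymm (not_lt.1 hx) (not_lt.1 hx'))
      have : max (|a| - l) 0 = 0 := max_eq_right (by linarith)
      rw [this, mul_zero]

/-- Let `g` be convex and differentiable on an open convex set `U`
containing `X`, with gradient matrix `G = ∇g(X)` at `X` (expressed through
directional derivatives), and `f = g + ‖·‖_{1,Λ}`.  For any symmetric index set `J`,
`grad^S_{ij} f(X) = 0` for all `(i,j) ∈ J` if and only if `Δ = 0` minimizes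
`f(X + Δ)` over symmetric `Δ` supported on `J` (with `X + Δ ∈ U`). -/
theorem min_norm_subgradient_iff_partial_minimizer {p : ℕ}
    (X Λ G : Matrix (Fin p) (Fin p) ℝ)
    (hXs : X.IsSymm) (hGs : G.IsSymm) (hΛs : Λ.IsSymm) (hΛ : ∀ i j, 0 ≤ Λ i j)
    (U : Set (Matrix (Fin p) (Fin p) ℝ)) (hUo : IsOpen U) (hUc : Convex ℝ U)
    (hXU : X ∈ U)
    (g : Matrix (Fin p) (Fin p) ℝ → ℝ) (hconv : ConvexOn ℝ U g)
    (hgrad : ∀ Δ : Matrix (Fin p) (Fin p) ℝ,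
      HasDerivAt (fun t : ℝ => g (X + t • Δ)) (∑ i, ∑ j, G i j * Δ i j) 0)
    (J : Set (Fin p × Fin p)) (hJ : ∀ i j, (i, j) ∈ J → (j, i) ∈ J) :
    (∀ ij ∈ J, gradS G Λ X ij.1 ij.2 = 0) ↔
      ∀ Δ : Matrix (Fin p) (Fin p) ℝ, Δ.IsSymm →
        (∀ ij, ij ∉ J → Δ ij.1 ij.2 = 0) → X + Δ ∈ U →
        g X + norm1 Λ X ≤ g (X + Δ) + norm1 Λ (X + Δ) := by
  constructor
  · -- gradS = 0 on J  ⇒  0 minimizes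
    intro hg Δ hΔs hΔJ hXΔU
    set D := ∑ i, ∑ j, G i j * Δ i j with hDdef
    have hD : HasDerivAt (fun t : ℝ => g (X + t • Δ)) D 0 := hgrad Δ
    -- (1) convexity lower bound : D ≤ g (X+Δ) - g X
    have h1 : D ≤ g (X + Δ) - g X := by
      have htend : Tendsto (slope (fun t : ℝ => g (X + t • Δ)) 0)
          (nhdsWithin (0:ℝ) (Set.Ioi 0)) (nhds D) :=
        (hasDerivAt_iff_tendsto_slope.mp hD).mono_left
          (nhdsWithin_mono _ (fun t ht => ne_of_gt ht))
      refine le_of_tendsto htend ?_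
      filter_upwards [Ioo_mem_nhdsGT_of_mem (by norm_num : (0:ℝ) ∈ Set.Ico 0 1)]
        with t ht
      obtain ⟨ht0, ht1⟩ := ht
      have hcvx := hconv.2 hXU hXΔU (show (0:ℝ) ≤ 1 - t by linarith)
        (le_of_lt ht0) (by ring)
      have hsm : (1 - t) • X + t • (X + Δ) = X + t • Δ := by
        ext k l'
        simp [Matrix.add_apply, Matrix.smul_apply, smul_eq_mul]
        ring
      rw [hsm] at hcvx
      rw [slope_def_field, sub_zero, div_le_iff₀ ht0]
      simp only [zero_smul, add_zero]
      simp only [smul_eq_mul] at hcvx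
      nlinarith [hcvx]
    -- (2) entrywise nonnegativity of D + h(X+Δ) - h(X)
    have hsum : D + (norm1 Λ (X + Δ) - norm1 Λ X)
        = ∑ k, ∑ l', (G k l' * Δ k l' + Λ k l' * (|X k l' + Δ k l'| - |X k l'|)) := by
      simp only [norm1, hDdef, Matrix.add_apply, ← Finset.sum_sub_distrib,
        ← Finset.sum_add_distrib]
      refine Finset.sum_congr rfl fun k _ => Finset.sum_congr rfl fun l' _ => by ring
    have h2 : 0 ≤ D + (norm1 Λ (X + Δ) - norm1 Λ X) := by
      rw [hsum]
      refine Finset.sum_nonneg fun k _ => Finset.sum_nonneg fun l' _ => ?_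
      by_cases hkl : (k, l') ∈ J
      · have hz := hg (k, l') hkl
        simp only [gradS] at hz
        exact key_nonneg (hΛ k l') hz
      · have : Δ k l' = 0 := hΔJ (k, l') hkl
        simp [this]
    linarith
  · -- 0 minimizes ⇒ gradS = 0 on J
    rintro hmin ⟨i, j⟩ hij
    set x := X i j with hxdef
    set a := G i j with hadef
    set l := Λ i j with hldef
    -- the symmetric elementary perturbation
    set E : Matrix (Fin p) (Fin p) ℝ :=
      fun k l' => if (k = i ∧ l' = j) ∨ (k = j ∧ l' = i) then 1 else 0 with hEdef
    set m : ℝ := if i = j then 1 else 2 with hmdef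
    have hm : 0 < m := by rw [hmdef]; split <;> norm_num
    have hEs : E.IsSymm := by
      rw [Matrix.IsSymm]
      ext k l'
      simp only [Matrix.transpose_apply, hEdef]
      exact if_congr (by tauto) rfl rfl
    -- the derivative of g along E
    have hE1 : E i j = 1 := by simp [hEdef]
    have hE2 : E j i = 1 := by simp [hEdef]
    have hsumG : ∑ k, ∑ l', G k l' * E k l' = m * a := by
      rw [sum_pair_support i j _ (fun k l' hkl => by simp [hEdef, hkl])]
      by_cases hij' : i = j
      · subst hij'
        rw [if_pos rfl, hE1, hmdef, if_pos rfl, ← hadef]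
        ring
      · rw [if_neg hij', hE1, hE2, hGs.apply i j, ← hadef, hmdef, if_neg hij']
        ring
    have hDeriv : HasDerivAt (fun t : ℝ => g (X + t • E)) (m * a) 0 := hsumG ▸ hgrad E
    -- the ℓ1 part along E
    have hnorm : ∀ t : ℝ, norm1 Λ (X + t • E)
        = norm1 Λ X + m * l * |x + t| - m * l * |x| := by
      intro t
      have hkey : norm1 Λ (X + t • E) - norm1 Λ X
          = ∑ k, ∑ l', (Λ k l' * |X k l' + t * E k l'| - Λ k l' * |X k l'|) := by
        simp only [norm1, Matrix.add_apply, Matrix.smul_apply, smul_eq_mul,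
          ← Finset.sum_sub_distrib]
      have hval : ∑ k, ∑ l', (Λ k l' * |X k l' + t * E k l'| - Λ k l' * |X k l'|)
          = m * l * |x + t| - m * l * |x| := by
        rw [sum_pair_support i j _ (fun k l' hkl => by simp [hEdef, hkl])]
        by_cases hij' : i = j
        · subst hij'
          rw [if_pos rfl, hE1, mul_one, ← hxdef, ← hldef, hmdef, if_pos rfl]
          ring
        · rw [if_neg hij', hE1, hE2, mul_one, hΛs.apply i j, hXs.apply i j,
            ← hxdef, ← hldef, hmdef, if_neg hij']
          ring
      linarith [hkey.symm ▸ hval]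
    -- eventual membership in U
    have hmem : ∀ᶠ t : ℝ in nhds 0, X + t • E ∈ U := by
      have hcont : Continuous fun t : ℝ => X + t • E :=
        continuous_const.add (continuous_id.smul continuous_const)
      have htend : Tendsto (fun t : ℝ => X + t • E) (nhds 0) (nhds X) := by
        simpa using hcont.tendsto 0
      exact htend.eventually (hUo.eventually_mem hXU)
    -- eventual lower bound from minimality
    have hineq : ∀ᶠ t : ℝ in nhds 0,
        m * l * |x| - m * l * |x + t| ≤ g (X + t • E) - g X := by
      filter_upwards [hmem] with t htU
      have hsupp : ∀ ij', ij' ∉ J → (t • E) ij'.1 ij'.2 = 0 := by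
        rintro ⟨k, l'⟩ hk
        have hE0 : E k l' = 0 := by
          by_contra hne
          have hc : (k = i ∧ l' = j) ∨ (k = j ∧ l' = i) := by
            by_contra h2
            exact hne (by simp [hEdef, h2])
          rcases hc with ⟨rfl, rfl⟩ | ⟨rfl, rfl⟩
          · exact hk hij
          · exact hk (hJ _ _ hij)
        simp [Matrix.smul_apply, hE0]
      have hmm := hmin (t • E) (hEs.smul t) hsupp htU
      have h5 := hnorm t
      linarith
    -- deduce bounds on m * a
    have hR : ∀ c : ℝ, (∀ᶠ t in nhdsWithin (0:ℝ) (Set.Ioi 0),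
        c * t ≤ m * l * |x| - m * l * |x + t|) → c ≤ m * a := by
      intro c hc
      refine deriv_ge_right hDeriv ?_
      filter_upwards [hc, hineq.filter_mono nhdsWithin_le_nhds] with t h1 h2
      simp only [zero_smul, add_zero]
      linarith
    have hL : ∀ c : ℝ, (∀ᶠ t in nhdsWithin (0:ℝ) (Set.Iio 0),
        c * t ≤ m * l * |x| - m * l * |x + t|) → m * a ≤ c := by
      intro c hc
      refine deriv_le_left hDeriv ?_
      filter_upwards [hc, hineq.filter_mono nhdsWithin_le_nhds] with t h1 h2
      simp only [zero_smul, add_zero]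
      linarith
    -- conclude gradS = 0 by cases on the sign of x
    show (if 0 < x then a + l else if x < 0 then a - l
          else Real.sign a * max (|a| - l) 0) = 0
    refine key_gradS_zero ?_ ?_ ?_
    · -- x > 0 :  a = -l
      intro hx
      have hev : ∀ᶠ t : ℝ in nhds 0,
          (-(m * l)) * t ≤ m * l * |x| - m * l * |x + t| := by
        filter_upwards [eventually_abs_sub_lt 0 hx] with t ht
        rw [sub_zero] at ht
        have hxt : 0 < x + t := by
          rcases abs_lt.1 ht with ⟨h', _⟩; linarith
        rw [abs_of_pos hx, abs_of_pos hxt]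
        exact le_of_eq (by ring)
      have hc1 : -(m * l) ≤ m * a := hR _ (hev.filter_mono nhdsWithin_le_nhds)
      have hc2 : m * a ≤ -(m * l) := hL _ (hev.filter_mono nhdsWithin_le_nhds)
      exact mul_left_cancel₀ hm.ne' (by rw [mul_neg]; exact le_antisymm hc2 hc1)
    · -- x < 0 :  a = l
      intro hx
      have hev : ∀ᶠ t : ℝ in nhds 0,
          (m * l) * t ≤ m * l * |x| - m * l * |x + t| := by
        filter_upwards [eventually_abs_sub_lt 0 (neg_pos.2 hx)] with t ht
        rw [sub_zero] at ht
        have hxt : x + t < 0 := by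
          rcases abs_lt.1 ht with ⟨_, h'⟩; linarith
        rw [abs_of_neg hx, abs_of_neg hxt]
        exact le_of_eq (by ring)
      have hc1 : m * l ≤ m * a := hR _ (hev.filter_mono nhdsWithin_le_nhds)
      have hc2 : m * a ≤ m * l := hL _ (hev.filter_mono nhdsWithin_le_nhds)
      exact mul_left_cancel₀ hm.ne' (le_antisymm hc2 hc1)
    · -- x = 0 :  |a| ≤ l
      intro hx
      have hc1 : -(m * l) ≤ m * a := by
        refine hR _ ?_
        filter_upwards [self_mem_nhdsWithin] with t (ht : 0 < t)
        rw [hx, abs_zero, zero_add, abs_of_pos ht]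
        exact le_of_eq (by ring)
      have hc2 : m * a ≤ m * l := by
        refine hL _ ?_
        filter_upwards [self_mem_nhdsWithin] with t (ht : t < 0)
        rw [hx, abs_zero, zero_add, abs_of_neg ht]
        exact le_of_eq (by ring)
      have ha1 : -l ≤ a := by
        have h' : m * (-l) ≤ m * a := by rw [mul_neg]; exact hc1
        exact (mul_le_mul_iff_right₀ hm).1 h'
      have ha2 : a ≤ l := (mul_le_mul_iff_right₀ hm).1 hc2
      exact abs_le.2 ⟨ha1, ha2⟩
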